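/- Let D be a digraph, let P be a directed path from a to b in D, let Q be a directed path in the subdigraph of D induced by V(D) ∖ V(P), and let S be a subset of V(Q). If every vertex of S can be inserted into P, then there exists a directed path R from a to b such that V(P) ∪ S ⊆ V(R) ⊆ V(P) ∪ V(Q). -/

import Mathlib

/-!
Basic definitions for finite digraphs (no loops, no multiple arcs), where the arc
relation is `A : V → V → Prop`.  Paths and cycles are given as lists of (distinct)
vertices.
-/

variable {V : Type*}

/-- A (directed) path, given by the list of its vertices. -/
def IsPathOn (A : V → V → Prop) (l : List V) : Prop :=
  l ≠ [] ∧ l.Nodup ∧ l.Chain' A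

/-- A (directed) cycle, given by the list of its vertices; its length (number of
arcs) equals the length of the list. -/
def IsCycleOn (A : V → V → Prop) (l : List V) : Prop :=
  2 ≤ l.length ∧ l.Nodup ∧ l.Chain' A ∧
    ∀ a ∈ l.getLast?, ∀ b ∈ l.head?, A a b

/-- A directed path from `a` to `b`. -/
def IsPathFromTo (A : V → V → Prop) (l : List V) (a b : V) : Prop :=
  IsPathOn A l ∧ l.head? = some a ∧ l.getLast? = some b

/-- Out-degree `d⁺(x)`. -/
noncomputable def outDeg (A : V → V → Prop) (x : V) : ℕ := {y | A x y}.ncard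

/-- In-degree `d⁻(x)`. -/
noncomputable def inDeg (A : V → V → Prop) (x : V) : ℕ := {y | A y x}.ncard

/-- Degree `d(x) = d⁺(x) + d⁻(x)`. -/
noncomputable def deg (A : V → V → Prop) (x : V) : ℕ := outDeg A x + inDeg A x

/-- Out-degree into a set, `d⁺(x, S)`. -/
noncomputable def outDegOn (A : V → V → Prop) (x : V) (S : Set V) : ℕ :=
  {y ∈ S | A x y}.ncard

/-- In-degree from a set, `d⁻(x, S)`. -/
noncomputable def inDegOn (A : V → V → Prop) (x : V) (S : Set V) : ℕ :=
  {y ∈ S | A y x}.ncard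

/-- Degree with respect to a set, `d(x, S) = d⁺(x, S) + d⁻(x, S)`. -/
noncomputable def degOn (A : V → V → Prop) (x : V) (S : Set V) : ℕ :=
  outDegOn A x S + inDegOn A x S

/-- Two distinct vertices are adjacent if there is an arc between them in some
direction. -/
def DAdj (A : V → V → Prop) (x y : V) : Prop := A x y ∨ A y x

/-- `D` is `S`-strongly connected: between any two distinct vertices of `S` there
are directed paths in both directions. -/
def SetStronglyConnected (A : V → V → Prop) (S : Set V) : Prop :=
  ∀ x ∈ S, ∀ y ∈ S, x ≠ y → ∃ l, IsPathFromTo A l x y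

/-- Strong connectivity. -/
def StronglyConnected (A : V → V → Prop) : Prop :=
  ∀ x y : V, x ≠ y → ∃ l, IsPathFromTo A l x y

/-- 2-strong connectivity: at least 3 vertices, and deleting any vertex leaves a
strongly connected digraph. -/
def TwoStronglyConnected [Fintype V] (A : V → V → Prop) : Prop :=
  3 ≤ Fintype.card V ∧
    ∀ w x y : V, x ≠ w → y ≠ w → x ≠ y → ∃ l, IsPathFromTo A l x y ∧ w ∉ l

/-- Condition `A₀` for a set `Y` of vertices. -/
def CondA0 [Fintype V] (A : V → V → Prop) (Y : Set V) : Prop :=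
  ∀ x ∈ Y, ∀ y ∈ Y, ∀ z ∈ Y,
    x ≠ y → x ≠ z → y ≠ z → ¬ DAdj A x y →
      (¬ A x z →
        deg A x + deg A y + outDeg A x + inDeg A z ≥ 3 * Fintype.card V - 2) ∧
      (¬ A z x →
        deg A x + deg A y + inDeg A x + outDeg A z ≥ 3 * Fintype.card V - 2)

/-- A `C`-bypass: a path of length at least two whose end-vertices lie on the
cycle `c` and whose internal vertices avoid `c`. -/
def IsBypass (A : V → V → Prop) (c p : List V) : Prop :=
  IsPathOn A p ∧ 3 ≤ p.length ∧
    (∀ a ∈ p.head?, a ∈ c) ∧ (∀ b ∈ p.getLast?, b ∈ c) ∧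
    ∀ v ∈ p.tail.dropLast, v ∉ c

/-- The vertex `y` can be inserted into the path `p`. -/
def CanInsert (A : V → V → Prop) (p : List V) (y : V) : Prop :=
  ∃ i, ∃ h : i + 1 < p.length, A (p[i]'(Nat.lt_of_succ_lt h)) y ∧ A y (p[i+1]'h)

/-- A `(C, x)`-path: a path from a vertex `u` of the cycle `c` to `x`, meeting `c`
only in `u`. -/
def IsCtoXPath (A : V → V → Prop) (c l : List V) (u x : V) : Prop :=
  IsPathFromTo A l u x ∧ u ∈ c ∧ ∀ v ∈ l, v ∈ c → v = u

/-- An `(x, C)`-path: a path from `x` to a vertex `v` of the cycle `c`, meeting `c`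
only in `v`. -/
def IsXtoCPath (A : V → V → Prop) (c l : List V) (x v : V) : Prop :=
  IsPathFromTo A l x v ∧ v ∈ c ∧ ∀ w ∈ l, w ∈ c → w = v


section MultiInsertionHelpers

private lemma consec_survive' {l₁ l₂ m₁ m₂ : List V} (seg : List V) {x y x' y' : V} (hne : x' ≠ x)
    (h : l₁ ++ x :: y :: l₂ = m₁ ++ x' :: y' :: m₂) :
    ∃ n₁ n₂, l₁ ++ x :: (seg ++ y :: l₂) = n₁ ++ x' :: y' :: n₂ := by
  rcases List.append_eq_append_iff.mp h with ⟨a', hm, hb⟩ | ⟨c', hl, hd⟩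
  · rcases a' with _ | ⟨u, _ | ⟨v, w⟩⟩
    · exact absurd (by injection hb with h1 _; exact h1.symm) hne
    · simp only [List.cons_append, List.nil_append, List.cons.injEq] at hb
      obtain ⟨rfl, rfl, rfl⟩ := hb
      exact ⟨l₁ ++ x :: seg, m₂, by simp⟩
    · simp only [List.cons_append, List.cons.injEq] at hb
      obtain ⟨rfl, rfl, rfl⟩ := hb
      exact ⟨l₁ ++ x :: (seg ++ y :: w), m₂, by simp⟩
  · rcases c' with _ | ⟨u, _ | ⟨v, w⟩⟩
    · simp only [List.nil_append, List.cons.injEq] at hd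
      exact absurd hd.1 hne
    · simp only [List.cons_append, List.nil_append, List.cons.injEq] at hd
      obtain ⟨rfl, rfl, rfl⟩ := hd
      exact ⟨m₁, seg ++ y :: l₂, by simp [hl]⟩
    · simp only [List.cons_append, List.cons.injEq] at hd
      obtain ⟨rfl, rfl, rfl⟩ := hd
      exact ⟨m₁, w ++ x :: (seg ++ y :: l₂), by simp [hl]⟩

private lemma consec_unique' {l₁ l₂ m₁ m₂ : List V} {x y y' : V}
    (hnd : (l₁ ++ x :: y :: l₂).Nodup)
    (h : l₁ ++ x :: y :: l₂ = m₁ ++ x :: y' :: m₂) : y = y' := by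
  have hx1 : x ∉ l₁ := fun hx => (List.nodup_append'.mp hnd).2.2 hx (by simp)
  have hx2 : x ∉ y :: l₂ := (List.nodup_cons.mp (List.nodup_append'.mp hnd).2.1).1
  rcases List.append_eq_append_iff.mp h with ⟨a', hm, hb⟩ | ⟨c', hl, hd⟩
  · rcases a' with _ | ⟨u, _ | ⟨v, w⟩⟩
    · simp only [List.nil_append, List.cons.injEq] at hb
      exact hb.2.1
    · simp only [List.cons_append, List.nil_append, List.cons.injEq] at hb
      obtain ⟨rfl, rfl, -⟩ := hb
      exact absurd (by simp) hx2
    · simp only [List.cons_append, List.cons.injEq] at hb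
      obtain ⟨rfl, rfl, rfl⟩ := hb
      exact absurd (by simp) hx2
  · rcases c' with _ | ⟨u, _ | ⟨v, w⟩⟩
    · simp only [List.nil_append, List.cons.injEq] at hd
      exact hd.2.1.symm
    · simp only [List.cons_append, List.nil_append, List.cons.injEq] at hd
      obtain ⟨rfl, -, -⟩ := hd
      exact absurd (by simp [hl]) hx1
    · simp only [List.cons_append, List.cons.injEq] at hd
      obtain ⟨rfl, -, -⟩ := hd
      exact absurd (by simp [hl]) hx1

private lemma canInsert_decomp' {A : V → V → Prop} {p : List V} {t : V}
    (h : CanInsert A p t) :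
    ∃ x y l₁ l₂, p = l₁ ++ x :: y :: l₂ ∧ A x t ∧ A t y := by
  obtain ⟨i, hi, h1, h2⟩ := h
  refine ⟨_, _, p.take i, p.drop (i+2), ?_, h1, h2⟩
  conv_lhs => rw [← List.take_append_drop i p]
  rw [List.drop_eq_getElem_cons (show i < p.length by omega),
    List.drop_eq_getElem_cons hi]

private lemma canInsert_of_decomp' {A : V → V → Prop} {t : V} {l₁ l₂ : List V} {x y : V}
    (h1 : A x t) (h2 : A t y) : CanInsert A (l₁ ++ x :: y :: l₂) t := by
  refine ⟨l₁.length, by simp, ?_, ?_⟩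
  · rw [List.getElem_append_right le_rfl]
    simpa using h1
  · rw [List.getElem_append_right (by omega)]
    have : l₁.length + 1 - l₁.length = 1 := by omega
    simp [this, h2]

private lemma aux_multi' (A : V → V → Prop) (a b : V) :
    ∀ n : ℕ, ∀ q : List V, q.length = n → q.Nodup → q.Chain' A →
    ∀ p : List V, IsPathFromTo A p a b → (∀ v ∈ q, v ∉ p) →
    ∀ S : Set V, (∀ s ∈ S, s ∈ q) → (∀ s ∈ S, CanInsert A p s) →
    ∃ r : List V, IsPathFromTo A r a b ∧
      (∀ v ∈ p, v ∈ r) ∧ (∀ s ∈ S, s ∈ r) ∧ (∀ v ∈ r, v ∈ p ∨ v ∈ q) := by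
  intro n
  induction n using Nat.strong_induction_on with
  | _ n ih =>
  intro q hqn hqnd hqch p hp hdisj S hSq hins
  classical
  by_cases hS : S.Nonempty
  swap
  · exact ⟨p, hp, fun v hv => hv, fun s hs => absurd ⟨s, hs⟩ hS, fun v hv => Or.inl hv⟩
  obtain ⟨s₀, hs₀⟩ := hS
  have hs₀q : s₀ ∈ q := hSq s₀ hs₀
  have hex : ∃ j, ∃ h : j < q.length, q[j] ∈ S := by
    obtain ⟨j, hj, hje⟩ := List.mem_iff_getElem.mp hs₀q
    exact ⟨j, hj, hje ▸ hs₀⟩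
  set j₁ := Nat.find hex with hj₁def
  obtain ⟨hj₁lt, hs₁S⟩ := Nat.find_spec hex
  obtain ⟨x, y, l₁, l₂, hpdec, hxA, hAy⟩ := canInsert_decomp' (hins _ hs₁S)
  set P₂ : ℕ → Prop := fun j => ∃ h : j < q.length, q[j] ∈ S ∧ A x q[j] ∧ A q[j] y with hP₂def
  have hP₂j₁ : P₂ j₁ := ⟨hj₁lt, hs₁S, hxA, hAy⟩
  have hj₁le : j₁ ≤ q.length - 1 := by omega
  set j₂ := Nat.findGreatest P₂ (q.length - 1) with hj₂def
  have hP₂j₂ : P₂ j₂ := Nat.findGreatest_spec hj₁le hP₂j₁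
  have hj₁j₂ : j₁ ≤ j₂ := Nat.le_findGreatest hj₁le hP₂j₁
  obtain ⟨hj₂lt, hs₂S, hxq2, hq2y⟩ := hP₂j₂
  set k := j₂ + 1 - j₁ with hkdef
  have hk0 : 0 < k := by omega
  set seg := (q.drop j₁).take k with hsegdef
  have hseglen : seg.length = k := by
    simp only [hsegdef, List.length_take, List.length_drop]
    omega
  have hseg_get : ∀ m (hm : m < seg.length),
      seg[m] = q[j₁ + m]'(by rw [hseglen] at hm; omega) := by
    intro m hm
    simp only [hsegdef, List.getElem_take, List.getElem_drop]
  have hqdec : q = q.take j₁ ++ (seg ++ q.drop (j₂ + 1)) := by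
    rw [hsegdef]
    conv_lhs => rw [← List.take_append_drop j₁ q]
    congr 1
    conv_lhs => rw [← List.take_append_drop k (q.drop j₁)]
    congr 1
    rw [List.drop_drop]
    congr 1
    omega
  have hsegne : seg ≠ [] := by
    intro h
    rw [h] at hseglen
    simp at hseglen
    omega
  have hseghead : seg.head? = some (q[j₁]'hj₁lt) := by
    rw [List.head?_eq_getElem?, List.getElem?_eq_getElem (by omega : 0 < seg.length)]
    rw [hseg_get 0 (by omega)]
    simp
  have hseglast : seg.getLast? = some (q[j₂]'hj₂lt) := by
    rw [List.getLast?_eq_getElem?,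
      List.getElem?_eq_getElem (by omega : seg.length - 1 < seg.length)]
    rw [hseg_get (seg.length - 1) (by omega)]
    simp only [show j₁ + (seg.length - 1) = j₂ by omega]
  obtain ⟨⟨hpne, hpnd, hpch⟩, hphead, hplast⟩ := hp
  rw [hpdec] at hpnd hpch hphead hplast
  obtain ⟨hch1, hch2, hlink1⟩ := List.isChain_append.mp hpch
  have hchyl₂ : (y :: l₂).Chain' A := (List.isChain_cons_cons.mp hch2).2
  have hseginf : seg <:+: q :=
    ⟨q.take j₁, q.drop (j₂+1), by rw [List.append_assoc]; exact hqdec.symm⟩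
  have hsegnd : seg.Nodup := List.Nodup.sublist hseginf.sublist hqnd
  have hsegch : seg.Chain' A := hqch.infix hseginf
  have hsegq : ∀ v ∈ seg, v ∈ q := fun v hv => hseginf.subset hv
  set r₀ := l₁ ++ x :: (seg ++ y :: l₂) with hr₀def
  have hperm : r₀.Perm ((l₁ ++ x :: y :: l₂) ++ seg) := by
    rw [hr₀def]
    have h1 : (seg ++ (y :: l₂)).Perm ((y :: l₂) ++ seg) := List.perm_append_comm
    have h2 := (h1.cons x).append_left l₁
    simpa using h2
  have hpdisj : (l₁ ++ x :: y :: l₂).Disjoint seg :=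
    fun v hv hvs => hdisj v (hsegq v hvs) (by rw [hpdec]; exact hv)
  have hr₀nd : r₀.Nodup :=
    hperm.nodup_iff.mpr (List.nodup_append'.mpr ⟨hpnd, hsegnd, hpdisj⟩)
  have hr₀ch : r₀.Chain' A := by
    rw [hr₀def]
    unfold List.Chain'
    rw [List.isChain_append]
    refine ⟨hch1, ?_, ?_⟩
    · rw [List.isChain_cons]
      constructor
      · intro z hz
        rw [List.head?_append, hseghead] at hz
        simp only [Option.mem_def, Option.some_or, Option.some.injEq] at hz
        subst hz
        exact hxA
      · rw [List.isChain_append]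
        refine ⟨hsegch, hchyl₂, ?_⟩
        intro w hw z hz
        rw [hseglast] at hw
        simp only [Option.mem_def, Option.some.injEq, List.head?_cons] at hw hz
        subst hw
        subst hz
        exact hq2y
    · intro w hw z hz
      simp only [Option.mem_def, Option.some.injEq, List.head?_cons] at hz
      subst hz
      exact hlink1 w hw x (by simp)
  have hr₀head : r₀.head? = some a := by
    rw [hr₀def]
    rw [List.head?_append] at hphead ⊢
    simpa using hphead
  have hr₀last : r₀.getLast? = some b := by
    have e1 : r₀ = (l₁ ++ x :: seg) ++ (y :: l₂) := by rw [hr₀def]; simp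
    have e2 : l₁ ++ x :: y :: l₂ = (l₁ ++ [x]) ++ (y :: l₂) := by simp
    rw [e2, List.getLast?_append] at hplast
    rw [e1, List.getLast?_append]
    obtain ⟨c, hc⟩ := Option.ne_none_iff_exists'.mp
      (by simp [List.getLast?_eq_none_iff] : (y :: l₂).getLast? ≠ none)
    rw [hc] at hplast ⊢
    simpa using hplast
  have hr₀path : IsPathFromTo A r₀ a b :=
    ⟨⟨by rw [hr₀def]; simp, hr₀nd, hr₀ch⟩, hr₀head, hr₀last⟩
  have hpr₀ : ∀ v ∈ p, v ∈ r₀ := by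
    intro v hv
    rw [hpdec] at hv
    rw [hr₀def]
    simp only [List.mem_append, List.mem_cons] at hv ⊢
    rcases hv with h|h|h|h
    exacts [Or.inl h, Or.inr (Or.inl h), Or.inr (Or.inr (Or.inr (Or.inl h))),
      Or.inr (Or.inr (Or.inr (Or.inr h)))]
  have hsegr₀ : ∀ v ∈ seg, v ∈ r₀ := by
    intro v hv
    rw [hr₀def]
    simp only [List.mem_append, List.mem_cons]
    exact Or.inr (Or.inr (Or.inl hv))
  have hr₀sub : ∀ v ∈ r₀, v ∈ p ∨ v ∈ seg := by
    intro v hv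
    rw [hr₀def] at hv
    rw [hpdec]
    simp only [List.mem_append, List.mem_cons] at hv ⊢
    rcases hv with h|h|h|h|h
    exacts [Or.inl (Or.inl h), Or.inl (Or.inr (Or.inl h)), Or.inr h,
      Or.inl (Or.inr (Or.inr (Or.inl h))), Or.inl (Or.inr (Or.inr (Or.inr h)))]
  set q' := q.drop (j₂ + 1) with hq'def
  have hq'nd : q'.Nodup := List.Nodup.sublist (List.drop_sublist _ _) hqnd
  have hq'ch : q'.Chain' A := hqch.drop _
  have hq'q : ∀ v ∈ q', v ∈ q := fun v hv => (List.drop_sublist _ _).subset hv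
  have hsegq'disj : ∀ v ∈ q', v ∉ seg := by
    have hnd2 : (q.take j₁ ++ (seg ++ q')).Nodup := by rw [← hqdec]; exact hqnd
    have h3 := (List.nodup_append'.mp (List.nodup_append'.mp hnd2).2.1).2.2
    exact fun v hv hvs => h3 hvs hv
  have hq'r₀ : ∀ v ∈ q', v ∉ r₀ := by
    intro v hv hvr
    rcases hr₀sub v hvr with h | h
    · exact hdisj v (hq'q v hv) h
    · exact hsegq'disj v hv h
  have hkey : ∀ s ∈ S, s ∉ seg → s ∈ q' ∧ ¬(A x s ∧ A s y) := by
    intro s hsS hsseg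
    obtain ⟨m, hm, rfl⟩ := List.mem_iff_getElem.mp (hSq s hsS)
    have hmj₁ : j₁ ≤ m := by
      by_contra hlt
      exact Nat.find_min hex (by omega : m < j₁) ⟨hm, hsS⟩
    have hmj₂ : j₂ < m := by
      by_contra hle
      apply hsseg
      apply List.mem_iff_getElem.mpr
      refine ⟨m - j₁, by rw [hseglen]; omega, ?_⟩
      rw [hseg_get (m - j₁) (by rw [hseglen]; omega)]
      simp only [show j₁ + (m - j₁) = m by omega]
    constructor
    · apply List.mem_iff_getElem.mpr
      refine ⟨m - (j₂ + 1), by simp only [hq'def, List.length_drop]; omega, ?_⟩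
      simp only [hq'def, List.getElem_drop]
      simp only [show j₂ + 1 + (m - (j₂ + 1)) = m by omega]
    · rintro ⟨h1, h2⟩
      exact Nat.findGreatest_is_greatest hmj₂ (by omega) ⟨hm, hsS, h1, h2⟩
  have hins' : ∀ s ∈ S, s ∉ seg → CanInsert A r₀ s := by
    intro s hsS hsseg
    obtain ⟨x', y', m₁, m₂, hdec2, h1, h2⟩ := canInsert_decomp' (hins s hsS)
    rw [hpdec] at hdec2
    by_cases hxx : x' = x
    · subst hxx
      have hyy : y = y' := consec_unique' hpnd hdec2
      exact absurd ⟨h1, hyy ▸ h2⟩ (hkey s hsS hsseg).2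
    · obtain ⟨n₁, n₂, hn⟩ := consec_survive' seg hxx hdec2
      rw [hr₀def, hn]
      exact canInsert_of_decomp' h1 h2
  have hlen : q'.length < n := by
    simp only [hq'def, List.length_drop]
    omega
  obtain ⟨r, hr, hr₀r, hS'r, hrsub⟩ :=
    ih q'.length hlen q' rfl hq'nd hq'ch r₀ hr₀path hq'r₀
      {s ∈ S | s ∉ seg} (fun s hs => (hkey s hs.1 hs.2).1) (fun s hs => hins' s hs.1 hs.2)
  refine ⟨r, hr, fun v hv => hr₀r v (hpr₀ v hv), ?_, ?_⟩
  · intro s hs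
    by_cases hseg' : s ∈ seg
    · exact hr₀r s (hsegr₀ s hseg')
    · exact hS'r s ⟨hs, hseg'⟩
  · intro v hv
    rcases hrsub v hv with h | h
    · rcases hr₀sub v h with h' | h'
      · exact Or.inl h'
      · exact Or.inr (hsegq v h')
    · exact Or.inr (hq'q v h)

end MultiInsertionHelpers

/-- Multi-insertion lemma, Lemma 3.3. -/
theorem multi_insertion_lemma (A : V → V → Prop) (hloops : ∀ v, ¬ A v v)
    (a b : V) (p : List V) (hp : IsPathFromTo A p a b)
    (q : List V) (hq : IsPathOn A q) (hdisj : ∀ v ∈ q, v ∉ p)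
    (S : Set V) (hSq : ∀ s ∈ S, s ∈ q)
    (hins : ∀ s ∈ S, CanInsert A p s) :
    ∃ r : List V, IsPathFromTo A r a b ∧
      (∀ v ∈ p, v ∈ r) ∧ (∀ s ∈ S, s ∈ r) ∧ (∀ v ∈ r, v ∈ p ∨ v ∈ q) := by
  obtain ⟨-, hqnd, hqch⟩ := hq
  exact aux_multi' A a b q.length q rfl hqnd hqch p hp hdisj S hSq hins
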